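/- arXiv:2202.02063 — 4 statements merged into one kernel-verified Lean document; each statement's English description precedes it below -/
import Mathlib

section
/- For quaternion matrices A, B ∈ ℚ^{M×N}, the inner product satisfies |⟨A,B⟩| ≤ ||A||_op · ||B||_*, where ⟨A,B⟩ = Tr(A*B), ||A||_op is the operator norm, and ||B||_* is the nuclear norm. -/
open Quaternion Matrix Finset

/-- The ℓ₂ norm of a quaternion vector. -/
noncomputable def qVecNorm {n : ℕ} (x : Fin n → ℍ[ℝ]) : ℝ :=
  Real.sqrt (∑ i, ‖x i‖ ^ 2)

/-- The operator norm `‖A‖_op = sup_{x ≠ 0} ‖Ax‖₂/‖x‖₂` of a quaternion matrix. -/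
noncomputable def qOpNorm {m n : ℕ} (A : Matrix (Fin m) (Fin n) ℍ[ℝ]) : ℝ :=
  sSup {c : ℝ | ∃ x : Fin n → ℍ[ℝ], x ≠ 0 ∧ c = qVecNorm (A.mulVec x) / qVecNorm x}

lemma qVecNorm_nonneg {n : ℕ} (x : Fin n → ℍ[ℝ]) : 0 ≤ qVecNorm x := Real.sqrt_nonneg _

lemma qVecNorm_zero {n : ℕ} : qVecNorm (0 : Fin n → ℍ[ℝ]) = 0 := by
  simp [qVecNorm]

lemma norm_le_qVecNorm {n : ℕ} (x : Fin n → ℍ[ℝ]) (j : Fin n) : ‖x j‖ ≤ qVecNorm x := by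
  have h : ‖x j‖ ^ 2 ≤ ∑ i, ‖x i‖ ^ 2 :=
    Finset.single_le_sum (f := fun i => ‖x i‖ ^ 2) (fun i _ => sq_nonneg _) (Finset.mem_univ j)
  calc ‖x j‖ = Real.sqrt (‖x j‖ ^ 2) := by rw [Real.sqrt_sq (norm_nonneg _)]
    _ ≤ qVecNorm x := Real.sqrt_le_sqrt h

lemma qVecNorm_pos {n : ℕ} {x : Fin n → ℍ[ℝ]} (hx : x ≠ 0) : 0 < qVecNorm x := by
  obtain ⟨j, hj⟩ := Function.ne_iff.mp hx
  exact lt_of_lt_of_le (norm_pos_iff.mpr hj) (norm_le_qVecNorm x j)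

lemma sum_norm_mul_le {n : ℕ} (p q : Fin n → ℍ[ℝ]) :
    ∑ i, ‖p i‖ * ‖q i‖ ≤ qVecNorm p * qVecNorm q := by
  have h := Finset.sum_mul_sq_le_sq_mul_sq Finset.univ (fun i => ‖p i‖) (fun i => ‖q i‖)
  have h1 : 0 ≤ ∑ i, ‖p i‖ * ‖q i‖ :=
    Finset.sum_nonneg fun i _ => mul_nonneg (norm_nonneg _) (norm_nonneg _)
  calc ∑ i, ‖p i‖ * ‖q i‖ = Real.sqrt ((∑ i, ‖p i‖ * ‖q i‖) ^ 2) := by rw [Real.sqrt_sq h1]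
    _ ≤ Real.sqrt ((∑ i, ‖p i‖ ^ 2) * (∑ i, ‖q i‖ ^ 2)) := Real.sqrt_le_sqrt h
    _ = qVecNorm p * qVecNorm q := Real.sqrt_mul (by positivity) _

lemma qCS {n : ℕ} (p q : Fin n → ℍ[ℝ]) :
    ‖∑ i, p i * q i‖ ≤ qVecNorm p * qVecNorm q := by
  refine le_trans (norm_sum_le _ _) ?_
  simpa [norm_mul] using sum_norm_mul_le p q

lemma qVecNorm_le_sum_norm {n : ℕ} (x : Fin n → ℍ[ℝ]) : qVecNorm x ≤ ∑ i, ‖x i‖ := by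
  rw [qVecNorm]
  rw [show (∑ i, ‖x i‖) = Real.sqrt ((∑ i, ‖x i‖) ^ 2) by
    rw [Real.sqrt_sq (Finset.sum_nonneg fun i _ => norm_nonneg _)]]
  refine Real.sqrt_le_sqrt ?_
  exact Finset.sum_sq_le_sq_sum_of_nonneg fun i _ => norm_nonneg _

lemma qOpNorm_bddAbove {m n : ℕ} (A : Matrix (Fin m) (Fin n) ℍ[ℝ]) :
    BddAbove {c : ℝ | ∃ x : Fin n → ℍ[ℝ], x ≠ 0 ∧ c = qVecNorm (A.mulVec x) / qVecNorm x} := by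
  refine ⟨∑ i, ∑ j, ‖A i j‖, ?_⟩
  rintro c ⟨x, hx, rfl⟩
  have hxpos := qVecNorm_pos hx
  rw [div_le_iff₀ hxpos]
  calc qVecNorm (A.mulVec x) ≤ ∑ i, ‖A.mulVec x i‖ := qVecNorm_le_sum_norm _
    _ ≤ ∑ i, (∑ j, ‖A i j‖) * qVecNorm x := by
        refine Finset.sum_le_sum fun i _ => ?_
        calc ‖A.mulVec x i‖ ≤ ∑ j, ‖A i j * x j‖ := by
              simpa [Matrix.mulVec, dotProduct] using
                norm_sum_le Finset.univ (fun j => A i j * x j)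
          _ ≤ ∑ j, ‖A i j‖ * qVecNorm x := by
              refine Finset.sum_le_sum fun j _ => ?_
              rw [norm_mul]
              exact mul_le_mul_of_nonneg_left (norm_le_qVecNorm x j) (norm_nonneg _)
          _ = (∑ j, ‖A i j‖) * qVecNorm x := by rw [Finset.sum_mul]
    _ = (∑ i, ∑ j, ‖A i j‖) * qVecNorm x := by rw [Finset.sum_mul]

lemma qOpNorm_nonneg {m n : ℕ} (A : Matrix (Fin m) (Fin n) ℍ[ℝ]) : 0 ≤ qOpNorm A := by
  rcases eq_or_ne n 0 with rfl | hn
  · have he : {c : ℝ | ∃ x : Fin 0 → ℍ[ℝ], x ≠ 0 ∧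
        c = qVecNorm (A.mulVec x) / qVecNorm x} = ∅ := by
      ext c
      simp only [Set.mem_setOf_eq, Set.mem_empty_iff_false, iff_false, not_exists]
      intro x ⟨hx, _⟩
      exact hx (funext fun i => i.elim0)
    rw [qOpNorm, he, Real.sSup_empty]
  · have hx : (fun _ => (1 : ℍ[ℝ]) : Fin n → ℍ[ℝ]) ≠ 0 := by
      intro h
      have : Fin.mk 0 (Nat.pos_of_ne_zero hn) = Fin.mk 0 (Nat.pos_of_ne_zero hn) := rfl
      have h1 := congrFun h ⟨0, Nat.pos_of_ne_zero hn⟩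
      simpa using h1
    have hmem : qVecNorm (A.mulVec (fun _ => 1)) / qVecNorm (fun _ => (1:ℍ[ℝ])) ∈
        {c : ℝ | ∃ x : Fin n → ℍ[ℝ], x ≠ 0 ∧ c = qVecNorm (A.mulVec x) / qVecNorm x} :=
      ⟨_, hx, rfl⟩
    exact le_trans (div_nonneg (qVecNorm_nonneg _) (qVecNorm_nonneg _))
      (le_csSup (qOpNorm_bddAbove A) hmem)

lemma qOpNorm_mulVec_le {m n : ℕ} (A : Matrix (Fin m) (Fin n) ℍ[ℝ]) (x : Fin n → ℍ[ℝ]) :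
    qVecNorm (A.mulVec x) ≤ qOpNorm A * qVecNorm x := by
  rcases eq_or_ne x 0 with rfl | hx
  · simp [Matrix.mulVec_zero, qVecNorm_zero]
  · have hmem : qVecNorm (A.mulVec x) / qVecNorm x ∈
        {c : ℝ | ∃ y : Fin n → ℍ[ℝ], y ≠ 0 ∧ c = qVecNorm (A.mulVec y) / qVecNorm y} :=
      ⟨x, hx, rfl⟩
    have h := le_csSup (qOpNorm_bddAbove A) hmem
    have hxpos := qVecNorm_pos hx
    calc qVecNorm (A.mulVec x)
        = qVecNorm (A.mulVec x) / qVecNorm x * qVecNorm x := by field_simp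
      _ ≤ qOpNorm A * qVecNorm x := mul_le_mul_of_nonneg_right h hxpos.le

lemma qre_sum {k : ℕ} (f : Fin k → ℍ[ℝ]) : (∑ j, f j).re = ∑ j, (f j).re :=
  map_sum (show ℍ[ℝ] →ₗ[ℝ] ℝ from QuaternionAlgebra.reₗ _ _ _) f Finset.univ

lemma qre_le_norm (q : ℍ[ℝ]) : q.re ≤ ‖q‖ := by
  have h : q.re ^ 2 ≤ normSq q := by
    rw [Quaternion.normSq_def']
    nlinarith [sq_nonneg q.imI, sq_nonneg q.imJ, sq_nonneg q.imK]
  calc q.re ≤ |q.re| := le_abs_self _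
    _ = Real.sqrt (q.re ^ 2) := (Real.sqrt_sq_eq_abs _).symm
    _ ≤ Real.sqrt (normSq q) := Real.sqrt_le_sqrt h
    _ = ‖q‖ := by rw [Quaternion.normSq_eq_norm_mul_self, Real.sqrt_mul_self (norm_nonneg _)]

lemma star_mul_self_re (q : ℍ[ℝ]) : (star q * q).re = ‖q‖ ^ 2 := by
  rw [Quaternion.star_mul_self, Quaternion.re_coe, Quaternion.normSq_eq_norm_mul_self, sq]

lemma qOpNorm_adj_mulVec_le {m n : ℕ} (A : Matrix (Fin m) (Fin n) ℍ[ℝ]) (x : Fin m → ℍ[ℝ]) :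
    qVecNorm (Aᴴ.mulVec x) ≤ qOpNorm A * qVecNorm x := by
  set s := Aᴴ.mulVec x with hs
  have hstar : ∀ j, star (s j) = ∑ i, star (x i) * A i j := by
    intro j
    simp [hs, Matrix.mulVec, dotProduct, Matrix.conjTranspose_apply, star_sum, StarMul.star_mul]
  have key : ∑ j, star (s j) * s j = ∑ i, star (x i) * (A.mulVec s) i := by
    calc ∑ j, star (s j) * s j = ∑ j, ∑ i, star (x i) * A i j * s j := by
          simp_rw [hstar, Finset.sum_mul]
      _ = ∑ i, ∑ j, star (x i) * (A i j * s j) := by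
          rw [Finset.sum_comm]; simp_rw [mul_assoc]
      _ = ∑ i, star (x i) * (A.mulVec s) i := by
          simp_rw [← Finset.mul_sum, Matrix.mulVec, dotProduct]
  have h1 : qVecNorm s ^ 2 = (∑ i, star (x i) * (A.mulVec s) i).re := by
    rw [← key, qre_sum]
    simp_rw [star_mul_self_re]
    rw [qVecNorm, Real.sq_sqrt (Finset.sum_nonneg fun i _ => sq_nonneg _)]
  have h2 : qVecNorm s ^ 2 ≤ qVecNorm x * (qOpNorm A * qVecNorm s) := by
    rw [h1]
    calc (∑ i, star (x i) * (A.mulVec s) i).re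
        ≤ ‖∑ i, star (x i) * (A.mulVec s) i‖ := qre_le_norm _
      _ ≤ qVecNorm (fun i => star (x i)) * qVecNorm (A.mulVec s) := qCS _ _
      _ = qVecNorm x * qVecNorm (A.mulVec s) := by
          unfold qVecNorm; simp [Quaternion.norm_star]
      _ ≤ qVecNorm x * (qOpNorm A * qVecNorm s) := by
          exact mul_le_mul_of_nonneg_left (qOpNorm_mulVec_le A s) (qVecNorm_nonneg _)
  rcases eq_or_lt_of_le (qVecNorm_nonneg s) with h0 | h0
  · rw [← h0]
    exact mul_nonneg (qOpNorm_nonneg A) (qVecNorm_nonneg _)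
  · nlinarith [qVecNorm_nonneg x, qOpNorm_nonneg A]

lemma unitary_col_qVecNorm {n : ℕ} {V : Matrix (Fin n) (Fin n) ℍ[ℝ]}
    (hV : V ∈ unitary (Matrix (Fin n) (Fin n) ℍ[ℝ])) (k : Fin n) :
    qVecNorm (fun j => V j k) = 1 := by
  have h0 : star V * V = 1 := hV.1
  have h1 : ∑ j, star (V j k) * V j k = 1 := by
    have h2 := congrArg (fun W => W k k) h0
    simpa [Matrix.mul_apply, Matrix.star_eq_conjTranspose, Matrix.conjTranspose_apply,
      Matrix.one_apply] using h2
  have h2 : ∑ j, ‖V j k‖ ^ 2 = 1 := by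
    have h3 := congrArg QuaternionAlgebra.re h1
    rw [qre_sum] at h3
    calc ∑ j, ‖V j k‖ ^ 2 = ∑ j, (star (V j k) * V j k).re := by simp_rw [star_mul_self_re]
      _ = (1 : ℍ[ℝ]).re := h3
      _ = 1 := by simp
  rw [qVecNorm, h2, Real.sqrt_one]

lemma diag_double_sum {α : Type*} [AddCommMonoid α] {M N : ℕ} (g : Fin M → Fin N → α) :
    ∑ k : Fin M, ∑ l : Fin N, (if (k : ℕ) = (l : ℕ) then g k l else 0) =
    ∑ t ∈ Finset.range (min M N),
      if h : t < M ∧ t < N then g ⟨t, h.1⟩ ⟨t, h.2⟩ else 0 := by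
  have inner : ∀ k : Fin M, (∑ l : Fin N, if (k : ℕ) = (l : ℕ) then g k l else 0) =
      if h : (k : ℕ) < M ∧ (k : ℕ) < N then g ⟨k, h.1⟩ ⟨k, h.2⟩ else 0 := by
    intro k
    by_cases h : (k : ℕ) < N
    · rw [dif_pos ⟨k.2, h⟩]
      rw [Finset.sum_eq_single (⟨(k : ℕ), h⟩ : Fin N)]
      · rw [if_pos rfl]
      · intro b _ hb
        rw [if_neg]
        intro hc
        exact hb (Fin.ext hc.symm)
      · intro habs; exact absurd (Finset.mem_univ _) habs
    · rw [dif_neg (by tauto)]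
      refine Finset.sum_eq_zero fun l _ => ?_
      rw [if_neg]
      intro hc
      exact h (hc ▸ l.2)
  simp_rw [inner]
  rw [Fin.sum_univ_eq_sum_range
    (fun t => if h : t < M ∧ t < N then g ⟨t, h.1⟩ ⟨t, h.2⟩ else 0) M]
  refine (Finset.sum_subset (Finset.range_subset_range.mpr (Nat.min_le_left _ _)) ?_).symm
  intro t ht hnt
  simp only [Finset.mem_range, lt_min_iff] at ht hnt
  rw [dif_neg (by tauto)]


set_option maxHeartbeats 1000000 in
/-- For quaternion matrices `A, B ∈ ℚ^{M×N}`, `|⟨A,B⟩| ≤ ‖A‖_op · ‖B‖_*`, where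
`⟨A,B⟩ = Tr(Aᴴ B)` and the nuclear norm of `B` is the sum `∑ σ i` of the singular
values in a quaternion SVD `B = U Σ Vᴴ`. -/
theorem stmt1 (M N : ℕ) (A B : Matrix (Fin M) (Fin N) ℍ[ℝ])
    (U : Matrix (Fin M) (Fin M) ℍ[ℝ]) (V : Matrix (Fin N) (Fin N) ℍ[ℝ])
    (σ : ℕ → ℝ) (S : Matrix (Fin M) (Fin N) ℍ[ℝ])
    (hU : U ∈ unitary (Matrix (Fin M) (Fin M) ℍ[ℝ]))
    (hV : V ∈ unitary (Matrix (Fin N) (Fin N) ℍ[ℝ]))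
    (hσ : ∀ i, 0 ≤ σ i)
    (hS : ∀ i j, S i j = if (i : ℕ) = (j : ℕ) then ((σ i : ℝ) : ℍ[ℝ]) else 0)
    (hB : B = U * S * Vᴴ) :
    ‖Matrix.trace (Aᴴ * B)‖ ≤ qOpNorm A * ∑ i ∈ range (min M N), σ i := by
  subst hB
  have inner_pull2 : ∀ (P : Prop) [Decidable P] (a : ℍ[ℝ]) (X : Fin N → Fin M → ℍ[ℝ]),
      (∑ j, ∑ i, if P then a * X j i else 0) = if P then a * ∑ j, ∑ i, X j i else 0 := by
    intro P _ a X
    split_ifs with h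
    · rw [Finset.mul_sum]
      exact Finset.sum_congr rfl fun j _ => (Finset.mul_sum _ _ _).symm
    · simp
  have swap3 : ∀ (F : Fin N → Fin N → Fin M → ℍ[ℝ]),
      ∑ j, ∑ l, ∑ k, F j l k = ∑ k, ∑ l, ∑ j, F j l k := by
    intro F
    calc ∑ j, ∑ l, ∑ k, F j l k = ∑ j, ∑ k, ∑ l, F j l k :=
          Finset.sum_congr rfl fun j _ => Finset.sum_comm
      _ = ∑ k, ∑ j, ∑ l, F j l k := Finset.sum_comm
      _ = ∑ k, ∑ l, ∑ j, F j l k := Finset.sum_congr rfl fun k _ => Finset.sum_comm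
  have htrace : Matrix.trace (Aᴴ * (U * S * Vᴴ)) =
      ∑ k : Fin M, ∑ l : Fin N, (if (k : ℕ) = (l : ℕ) then
        ((σ (k : ℕ) : ℝ) : ℍ[ℝ]) *
          ∑ j : Fin N, ∑ i, star (A i j) * (U i k * star (V j l)) else 0) := by
    rw [← Matrix.mul_assoc, ← Matrix.mul_assoc, Matrix.trace]
    simp only [Matrix.diag, Matrix.mul_apply, Matrix.conjTranspose_apply]
    simp_rw [Finset.sum_mul, hS]
    simp only [mul_ite, ite_mul, mul_zero, zero_mul]
    simp_rw [← Quaternion.coe_commutes, mul_assoc]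
    rw [swap3]
    exact Finset.sum_congr rfl fun k _ => Finset.sum_congr rfl fun l _ =>
      inner_pull2 _ _ _
  have hf : ∀ (k : Fin M) (l : Fin N),
      ‖∑ j : Fin N, ∑ i, star (A i j) * (U i k * star (V j l))‖ ≤ qOpNorm A := by
    intro k l
    have hre : (∑ j : Fin N, ∑ i, star (A i j) * (U i k * star (V j l))) =
        ∑ j, (∑ i, star (A i j) * U i k) * star (V j l) := by
      simp_rw [← mul_assoc, ← Finset.sum_mul]
    rw [hre]
    have h1 : (fun j => ∑ i, star (A i j) * U i k) = Aᴴ.mulVec (fun i => U i k) := by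
      funext j
      simp [Matrix.mulVec, dotProduct, Matrix.conjTranspose_apply]
    have hadj := qOpNorm_adj_mulVec_le A (fun i => U i k)
    rw [unitary_col_qVecNorm hU k, mul_one] at hadj
    calc ‖∑ j, (∑ i, star (A i j) * U i k) * star (V j l)‖
        ≤ qVecNorm (fun j => ∑ i, star (A i j) * U i k) *
            qVecNorm (fun j => star (V j l)) := qCS _ _
      _ = qVecNorm (Aᴴ.mulVec (fun i => U i k)) * qVecNorm (fun j => V j l) := by
          rw [h1]
          congr 1
          unfold qVecNorm
          simp [Quaternion.norm_star]
      _ ≤ qOpNorm A * 1 := by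
          rw [unitary_col_qVecNorm hV l]
          exact mul_le_mul_of_nonneg_right hadj zero_le_one
      _ = qOpNorm A := mul_one _
  rw [htrace, diag_double_sum]
  refine le_trans (norm_sum_le _ _) ?_
  have hle : ∀ t ∈ Finset.range (min M N),
      ‖if h : t < M ∧ t < N then
        ((σ ((⟨t, h.1⟩ : Fin M) : ℕ) : ℝ) : ℍ[ℝ]) *
          ∑ j : Fin N, ∑ i, star (A i j) * (U i ⟨t, h.1⟩ * star (V j ⟨t, h.2⟩)) else 0‖
      ≤ σ t * qOpNorm A := by
    intro t ht
    simp only [Finset.mem_range, lt_min_iff] at ht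
    rw [dif_pos ht, norm_mul, Quaternion.norm_coe, Real.norm_eq_abs, abs_of_nonneg (hσ t)]
    exact mul_le_mul_of_nonneg_left (hf _ _) (hσ t)
  refine le_trans (Finset.sum_le_sum hle) ?_
  rw [← Finset.sum_mul, mul_comm]
end

section
/- Let A = A₀ + A₁i + A₂j + A₃k be a quaternion matrix with real component matrices A₀, A₁, A₂, A₃ ∈ ℝ^{M×N}. Then ||A||_* ≥ ||A₀ + A₁i||_* ≥ ||A₀||_*, where the middle term is the nuclear norm of the complex matrix A₀ + A₁i. -/
open Quaternion Matrix Finset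

namespace Stmt2Aux

variable {𝕜 : Type*}

lemma entry_psq [Ring 𝕜] [Algebra ℝ 𝕜] {M N : ℕ}
    (σ : ℕ → ℝ) (S : Matrix (Fin M) (Fin N) 𝕜)
    (hS : ∀ i j, S i j = if (i : ℕ) = (j : ℕ) then algebraMap ℝ 𝕜 (σ (i : ℕ)) else 0)
    (P : Matrix (Fin M) (Fin M) 𝕜) (Q : Matrix (Fin N) (Fin N) 𝕜) (i : Fin M) (j : Fin N) :
    (P * S * Q) i j = ∑ k : Fin (min M N),
      σ k • (P i (Fin.castLE (min_le_left M N) k) * Q (Fin.castLE (min_le_right M N) k) j) := by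
  have step1 : (P * S * Q) i j
      = ∑ b : Fin N, ∑ a : Fin M, (if (a : ℕ) = (b : ℕ) then σ (a : ℕ) • (P i a * Q b j) else 0) := by
    simp_rw [Matrix.mul_apply, Finset.sum_mul]
    refine Finset.sum_congr rfl fun b _ => Finset.sum_congr rfl fun a _ => ?_
    rw [hS]
    split
    · rw [Algebra.smul_def, ← mul_assoc, ← Algebra.commutes, mul_assoc]
    · simp
  have step2 : (∑ b : Fin N, ∑ a : Fin M, (if (a : ℕ) = (b : ℕ) then σ (a : ℕ) • (P i a * Q b j) else 0))
      = ∑ p : Fin N × Fin M,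
          (if ((p.2 : ℕ) = (p.1 : ℕ)) then σ (p.2 : ℕ) • (P i p.2 * Q p.1 j) else 0) := by
    rw [Fintype.sum_prod_type]
  rw [step1, step2, ← Finset.sum_filter]
  refine Finset.sum_bij' (i := fun (p : Fin N × Fin M) hp =>
      (⟨(p.2 : ℕ), ?_⟩ : Fin (min M N)))
    (j := fun (k : Fin (min M N)) _ =>
      ((Fin.castLE (min_le_right M N) k, Fin.castLE (min_le_left M N) k) : Fin N × Fin M))
    ?_ ?_ ?_ ?_ ?_
  · simp only [Finset.mem_filter, Finset.mem_univ, true_and] at hp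
    exact lt_min p.2.isLt (hp ▸ p.1.isLt)
  · intro a ha; exact Finset.mem_univ _
  · intro a ha
    simp only [Finset.mem_filter, Finset.mem_univ, true_and]
    rfl
  · intro a ha
    simp only [Finset.mem_filter, Finset.mem_univ, true_and] at ha
    ext
    · exact ha
    · rfl
  · intro a ha; rfl
  · intro p hp
    simp only [Finset.mem_filter, Finset.mem_univ, true_and] at hp
    exact congrArg (fun x => σ (p.2 : ℕ) • (P i p.2 * Q x j))
      (Fin.ext hp.symm : p.1 = Fin.castLE (min_le_right M N) ⟨(p.2 : ℕ), lt_min p.2.isLt (hp ▸ p.1.isLt)⟩)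


lemma key [NormedRing 𝕜] [StarRing 𝕜] [NormedAlgebra ℝ 𝕜]
    (r : 𝕜 →ₗ[ℝ] ℝ) (hr1 : r 1 = 1) (hrle : ∀ x : 𝕜, r x ≤ ‖x‖)
    (hcol : ∀ x : 𝕜, r (star x * x) = ‖x‖ ^ 2) (hrow : ∀ x : 𝕜, r (x * star x) = ‖x‖ ^ 2)
    {M N : ℕ} (σ : ℕ → ℝ) (hσ : ∀ i, 0 ≤ σ i)
    (S : Matrix (Fin M) (Fin N) 𝕜)
    (hS : ∀ i j, S i j = if (i : ℕ) = (j : ℕ) then algebraMap ℝ 𝕜 (σ (i : ℕ)) else 0)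
    (P : Matrix (Fin M) (Fin M) 𝕜) (Q : Matrix (Fin N) (Fin N) 𝕜)
    (hP : P ∈ unitary (Matrix (Fin M) (Fin M) 𝕜))
    (hQ : Q ∈ unitary (Matrix (Fin N) (Fin N) 𝕜)) :
    ∑ k : Fin (min M N),
        r ((P * S * Q) (Fin.castLE (min_le_left M N) k) (Fin.castLE (min_le_right M N) k))
      ≤ ∑ k ∈ range (min M N), σ k := by
  have col : ∀ c : Fin M, ∑ a : Fin M, ‖P a c‖ ^ 2 = 1 := by
    intro c
    have h1 : star P * P = 1 := hP.1
    have h2 : r ((star P * P) c c) = r ((1 : Matrix (Fin M) (Fin M) 𝕜) c c) := by rw [h1]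
    rw [Matrix.mul_apply] at h2
    simp only [Matrix.one_apply_eq] at h2
    rw [map_sum] at h2
    simp only [Matrix.star_apply, hcol] at h2
    rw [h2, hr1]
  have row : ∀ c : Fin N, ∑ b : Fin N, ‖Q c b‖ ^ 2 = 1 := by
    intro c
    have h1 : Q * star Q = 1 := hQ.2
    have h2 : r ((Q * star Q) c c) = r ((1 : Matrix (Fin N) (Fin N) 𝕜) c c) := by rw [h1]
    rw [Matrix.mul_apply] at h2
    simp only [Matrix.one_apply_eq] at h2
    rw [map_sum] at h2
    simp only [Matrix.star_apply, hrow] at h2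
    rw [h2, hr1]
  have bound : ∀ k' : Fin (min M N),
      ∑ k : Fin (min M N), r (P (Fin.castLE (min_le_left M N) k) (Fin.castLE (min_le_left M N) k')
        * Q (Fin.castLE (min_le_right M N) k') (Fin.castLE (min_le_right M N) k)) ≤ 1 := by
    intro k'
    set c : Fin M := Fin.castLE (min_le_left M N) k'
    set d : Fin N := Fin.castLE (min_le_right M N) k'
    set f : Fin (min M N) → ℝ := fun k => ‖P (Fin.castLE (min_le_left M N) k) c‖
    set g : Fin (min M N) → ℝ := fun k => ‖Q d (Fin.castLE (min_le_right M N) k)‖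
    have hstep : ∀ k : Fin (min M N),
        r (P (Fin.castLE (min_le_left M N) k) c * Q d (Fin.castLE (min_le_right M N) k))
          ≤ f k * g k := fun k => (hrle _).trans (norm_mul_le _ _)
    refine (Finset.sum_le_sum fun k _ => hstep k).trans ?_
    have hf : ∑ k : Fin (min M N), f k ^ 2 ≤ 1 := by
      rw [← col c]
      have := Finset.sum_image (f := fun a : Fin M => ‖P a c‖ ^ 2)
        (g := Fin.castLE (min_le_left M N)) (s := Finset.univ)
        (fun x _ y _ h => Fin.castLE_injective _ h)
      rw [← this]
      exact Finset.sum_le_sum_of_subset_of_nonneg (Finset.subset_univ _)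
        fun _ _ _ => sq_nonneg _
    have hg : ∑ k : Fin (min M N), g k ^ 2 ≤ 1 := by
      rw [← row d]
      have := Finset.sum_image (f := fun b : Fin N => ‖Q d b‖ ^ 2)
        (g := Fin.castLE (min_le_right M N)) (s := Finset.univ)
        (fun x _ y _ h => Fin.castLE_injective _ h)
      rw [← this]
      exact Finset.sum_le_sum_of_subset_of_nonneg (Finset.subset_univ _)
        fun _ _ _ => sq_nonneg _
    have cs := Finset.sum_mul_sq_le_sq_mul_sq Finset.univ f g
    have hnn : (0:ℝ) ≤ ∑ k : Fin (min M N), f k * g k :=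
      Finset.sum_nonneg fun k _ => mul_nonneg (norm_nonneg _) (norm_nonneg _)
    have hfn : (0:ℝ) ≤ ∑ k : Fin (min M N), f k ^ 2 :=
      Finset.sum_nonneg fun k _ => sq_nonneg _
    have hgn : (0:ℝ) ≤ ∑ k : Fin (min M N), g k ^ 2 :=
      Finset.sum_nonneg fun k _ => sq_nonneg _
    nlinarith
  calc ∑ k : Fin (min M N),
        r ((P * S * Q) (Fin.castLE (min_le_left M N) k) (Fin.castLE (min_le_right M N) k))
      = ∑ k : Fin (min M N), ∑ k' : Fin (min M N),
          σ k' * r (P (Fin.castLE (min_le_left M N) k) (Fin.castLE (min_le_left M N) k')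
            * Q (Fin.castLE (min_le_right M N) k') (Fin.castLE (min_le_right M N) k)) := by
        refine Finset.sum_congr rfl fun k _ => ?_
        rw [entry_psq σ S hS, map_sum]
        exact Finset.sum_congr rfl fun k' _ => by rw [_root_.map_smul, smul_eq_mul]
    _ = ∑ k' : Fin (min M N), σ k' *
          ∑ k : Fin (min M N),
            r (P (Fin.castLE (min_le_left M N) k) (Fin.castLE (min_le_left M N) k')
              * Q (Fin.castLE (min_le_right M N) k') (Fin.castLE (min_le_right M N) k)) := by
        rw [Finset.sum_comm]
        exact Finset.sum_congr rfl fun k' _ => (Finset.mul_sum _ _ _).symm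
    _ ≤ ∑ k' : Fin (min M N), σ k' * 1 :=
        Finset.sum_le_sum fun k' _ => mul_le_mul_of_nonneg_left (bound k') (hσ _)
    _ = ∑ k ∈ range (min M N), σ k := by
        simp only [mul_one]
        exact Fin.sum_univ_eq_sum_range _ _


lemma mapu {R S : Type*} [Ring R] [StarRing R] [Ring S] [StarRing S]
    {n : ℕ} (f : R →+* S) (hf : ∀ a, f (star a) = star (f a))
    {U : Matrix (Fin n) (Fin n) R} (hU : U ∈ unitary (Matrix (Fin n) (Fin n) R)) :
    U.map f ∈ unitary (Matrix (Fin n) (Fin n) S) := by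
  have hstar : star (U.map ⇑f) = (star U).map ⇑f := by
    rw [Matrix.star_eq_conjTranspose, Matrix.star_eq_conjTranspose,
      Matrix.conjTranspose_map f hf]
  constructor
  · rw [hstar, ← Matrix.map_mul, hU.1, Matrix.map_one f f.map_zero f.map_one]
  · rw [hstar, ← Matrix.map_mul, hU.2, Matrix.map_one f f.map_zero f.map_one]

lemma sandwich {R : Type*} [Ring R] [StarRing R] {M N : ℕ}
    (U : Matrix (Fin M) (Fin M) R) (V : Matrix (Fin N) (Fin N) R)
    (S : Matrix (Fin M) (Fin N) R)
    (hU : U ∈ unitary (Matrix (Fin M) (Fin M) R))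
    (hV : V ∈ unitary (Matrix (Fin N) (Fin N) R)) :
    Uᴴ * (U * S * Vᴴ) * V = S := by
  have h1 : Uᴴ * U = 1 := by rw [← Matrix.star_eq_conjTranspose]; exact hU.1
  have h2 : Vᴴ * V = 1 := by rw [← Matrix.star_eq_conjTranspose]; exact hV.1
  calc Uᴴ * (U * S * Vᴴ) * V = (Uᴴ * U) * S * (Vᴴ * V) := by
        simp only [Matrix.mul_assoc]
    _ = S := by rw [h1, h2, Matrix.one_mul, Matrix.mul_one]


lemma transfer1 {M N : ℕ} (U : Matrix (Fin M) (Fin M) ℝ) (V : Matrix (Fin N) (Fin N) ℝ)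
    (A0 : Matrix (Fin M) (Fin N) ℝ) (B : Matrix (Fin M) (Fin N) ℂ)
    (hB : ∀ i j, (B i j).re = A0 i j) (i : Fin M) (j : Fin N) :
    (((U.map (⇑Complex.ofRealHom))ᴴ * B * (V.map (⇑Complex.ofRealHom))) i j).re
      = (Uᴴ * A0 * V) i j := by
  simp only [Matrix.mul_apply, Matrix.conjTranspose_apply, Matrix.map_apply,
    Finset.sum_mul, Complex.ofRealHom_eq_coe]
  rw [Complex.re_sum]
  refine Finset.sum_congr rfl fun b _ => ?_
  rw [Complex.re_sum]
  refine Finset.sum_congr rfl fun a _ => ?_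
  rw [← hB a b]
  simp [Complex.mul_re, Complex.conj_ofReal]

lemma qre (z w : ℂ) (q : ℍ[ℝ]) (b : ℂ) (h1 : b.re = q.re) (h2 : b.im = q.imI) :
    (star (coeComplex z) * q * coeComplex w).re = (star z * b * w).re := by
  obtain ⟨zr, zi⟩ := z
  obtain ⟨wr, wi⟩ := w
  simp only [Quaternion.re_coeComplex, Quaternion.imI_coeComplex, Quaternion.imJ_coeComplex,
    Quaternion.imK_coeComplex, Quaternion.re_mul, Quaternion.re_star, Quaternion.imI_star,
    Quaternion.imJ_star, Quaternion.imK_star, Quaternion.imI_mul, Quaternion.imJ_mul,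
    Quaternion.imK_mul, Complex.mul_re, Complex.mul_im, Complex.star_def, Complex.conj_re,
    Complex.conj_im] at *
  rw [h1, h2]
  ring

lemma transfer2 {M N : ℕ} (U : Matrix (Fin M) (Fin M) ℂ) (V : Matrix (Fin N) (Fin N) ℂ)
    (A : Matrix (Fin M) (Fin N) ℍ[ℝ]) (B : Matrix (Fin M) (Fin N) ℂ)
    (h1 : ∀ i j, (B i j).re = (A i j).re) (h2 : ∀ i j, (B i j).im = (A i j).imI)
    (i : Fin M) (j : Fin N) :
    (((U.map coeComplex)ᴴ * A * (V.map coeComplex)) i j).re = ((Uᴴ * B * V) i j).re := by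
  simp only [Matrix.mul_apply, Matrix.conjTranspose_apply, Matrix.map_apply, Finset.sum_mul]
  rw [show ∀ (s : Finset (Fin N)) (f : Fin N → ℍ[ℝ]), (∑ x ∈ s, f x).re = ∑ x ∈ s, (f x).re from
    fun s f => map_sum (QuaternionAlgebra.reₗ (-1 : ℝ) (0 : ℝ) (-1 : ℝ)) f s, Complex.re_sum]
  refine Finset.sum_congr rfl fun b _ => ?_
  rw [show ∀ (s : Finset (Fin M)) (f : Fin M → ℍ[ℝ]), (∑ x ∈ s, f x).re = ∑ x ∈ s, (f x).re from
    fun s f => map_sum (QuaternionAlgebra.reₗ (-1 : ℝ) (0 : ℝ) (-1 : ℝ)) f s, Complex.re_sum]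
  refine Finset.sum_congr rfl fun a _ => ?_
  exact qre (U a i) (V b j) (A a b) (B a b) (h1 a b) (h2 a b)


lemma creLm_le (x : ℂ) : Complex.reLm x ≤ ‖x‖ :=
  Complex.re_le_norm x

lemma cnorm_sq (x : ℂ) : ‖x‖ ^ 2 = x.re ^ 2 + x.im ^ 2 := by
  rw [Complex.sq_norm, Complex.normSq_apply]; ring

lemma chcol (x : ℂ) : Complex.reLm (star x * x) = ‖x‖ ^ 2 := by
  have h : (star x * x).re = x.re ^ 2 + x.im ^ 2 := by
    simp [Complex.mul_re, Complex.star_def]; ring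
  rw [show Complex.reLm (star x * x) = (star x * x).re from rfl, h, cnorm_sq]

lemma chrow (x : ℂ) : Complex.reLm (x * star x) = ‖x‖ ^ 2 := by
  have h : (x * star x).re = x.re ^ 2 + x.im ^ 2 := by
    simp [Complex.mul_re, Complex.star_def]; ring
  rw [show Complex.reLm (x * star x) = (x * star x).re from rfl, h, cnorm_sq]

lemma qnorm_sq (q : ℍ[ℝ]) : ‖q‖ ^ 2 = normSq q := by
  rw [Quaternion.normSq_eq_norm_mul_self, sq]

lemma qre_le (q : ℍ[ℝ]) : (QuaternionAlgebra.reₗ (-1 : ℝ) (0 : ℝ) (-1 : ℝ)) q ≤ ‖q‖ := by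
  have h1 : ‖q‖ ^ 2 = q.re ^ 2 + q.imI ^ 2 + q.imJ ^ 2 + q.imK ^ 2 := by
    rw [qnorm_sq, Quaternion.normSq_def']
  have h2 : (QuaternionAlgebra.reₗ (-1 : ℝ) (0 : ℝ) (-1 : ℝ)) q = q.re := rfl
  nlinarith [norm_nonneg q, sq_nonneg q.imI, sq_nonneg q.imJ, sq_nonneg q.imK]

lemma qhcol (q : ℍ[ℝ]) : (QuaternionAlgebra.reₗ (-1 : ℝ) (0 : ℝ) (-1 : ℝ)) (star q * q) = ‖q‖ ^ 2 := by
  have : (QuaternionAlgebra.reₗ (-1 : ℝ) (0 : ℝ) (-1 : ℝ)) (star q * q) = (star q * q).re := rfl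
  rw [this, Quaternion.star_mul_self, Quaternion.re_coe, qnorm_sq]

lemma qhrow (q : ℍ[ℝ]) : (QuaternionAlgebra.reₗ (-1 : ℝ) (0 : ℝ) (-1 : ℝ)) (q * star q) = ‖q‖ ^ 2 := by
  have : (QuaternionAlgebra.reₗ (-1 : ℝ) (0 : ℝ) (-1 : ℝ)) (q * star q) = (q * star q).re := rfl
  rw [this, Quaternion.self_mul_star, Quaternion.re_coe, qnorm_sq]

lemma rid_le (x : ℝ) : (LinearMap.id : ℝ →ₗ[ℝ] ℝ) x ≤ ‖x‖ :=
  (le_abs_self x).trans_eq (Real.norm_eq_abs x).symm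

lemma rhcol (x : ℝ) : (LinearMap.id : ℝ →ₗ[ℝ] ℝ) (star x * x) = ‖x‖ ^ 2 := by
  simp [Real.norm_eq_abs, sq_abs, ← sq]

lemma starC (a : ℝ) : Complex.ofRealHom (star a) = star (Complex.ofRealHom a) := by
  simp [Complex.conj_ofReal]

lemma starQ (z : ℂ) : (Quaternion.ofComplex.toRingHom) (star z) = star (Quaternion.ofComplex.toRingHom z) := by
  show coeComplex (star z) = star (coeComplex z)
  ext <;> simp [Complex.star_def]

end Stmt2Aux


open Stmt2Aux in
/-- Let `A = A₀ + A₁i + A₂j + A₃k` be a quaternion matrix with real component matrices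
`A₀,...,A₃`.  Then `‖A‖_* ≥ ‖A₀ + A₁i‖_* ≥ ‖A₀‖_*`, where the three nuclear norms are the
sums of the singular values from a quaternion SVD of `A`, a complex SVD of `A₀ + A₁i`,
and a real SVD of `A₀`, respectively. -/
theorem stmt2 (M N : ℕ)
    (A0 A1 A2 A3 : Matrix (Fin M) (Fin N) ℝ)
    (A : Matrix (Fin M) (Fin N) ℍ[ℝ])
    (hA : ∀ i j, A i j = ⟨A0 i j, A1 i j, A2 i j, A3 i j⟩)
    (B : Matrix (Fin M) (Fin N) ℂ)
    (hB : ∀ i j, B i j = ⟨A0 i j, A1 i j⟩)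
    -- quaternion SVD of A
    (UQ : Matrix (Fin M) (Fin M) ℍ[ℝ]) (VQ : Matrix (Fin N) (Fin N) ℍ[ℝ])
    (σQ : ℕ → ℝ) (SQ : Matrix (Fin M) (Fin N) ℍ[ℝ])
    (hUQ : UQ ∈ unitary (Matrix (Fin M) (Fin M) ℍ[ℝ]))
    (hVQ : VQ ∈ unitary (Matrix (Fin N) (Fin N) ℍ[ℝ]))
    (hσQ : ∀ i, 0 ≤ σQ i)
    (hSQ : ∀ i j, SQ i j = if (i : ℕ) = (j : ℕ) then ((σQ i : ℝ) : ℍ[ℝ]) else 0)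
    (hAQ : A = UQ * SQ * VQᴴ)
    -- complex SVD of B = A₀ + A₁ i
    (UC : Matrix (Fin M) (Fin M) ℂ) (VC : Matrix (Fin N) (Fin N) ℂ)
    (σC : ℕ → ℝ) (SC : Matrix (Fin M) (Fin N) ℂ)
    (hUC : UC ∈ unitary (Matrix (Fin M) (Fin M) ℂ))
    (hVC : VC ∈ unitary (Matrix (Fin N) (Fin N) ℂ))
    (hσC : ∀ i, 0 ≤ σC i)
    (hSC : ∀ i j, SC i j = if (i : ℕ) = (j : ℕ) then ((σC i : ℝ) : ℂ) else 0)
    (hBC : B = UC * SC * VCᴴ)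
    -- real SVD of A₀
    (UR : Matrix (Fin M) (Fin M) ℝ) (VR : Matrix (Fin N) (Fin N) ℝ)
    (σR : ℕ → ℝ) (SR : Matrix (Fin M) (Fin N) ℝ)
    (hUR : UR ∈ unitary (Matrix (Fin M) (Fin M) ℝ))
    (hVR : VR ∈ unitary (Matrix (Fin N) (Fin N) ℝ))
    (hσR : ∀ i, 0 ≤ σR i)
    (hSR : ∀ i j, SR i j = if (i : ℕ) = (j : ℕ) then σR i else 0)
    (hAR : A0 = UR * SR * VRᴴ) :
    ∑ i ∈ range (min M N), σR i ≤ ∑ i ∈ range (min M N), σC i ∧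
      ∑ i ∈ range (min M N), σC i ≤ ∑ i ∈ range (min M N), σQ i := by
  constructor
  · -- real ≤ complex
    set W : Matrix (Fin M) (Fin M) ℂ := UR.map ⇑Complex.ofRealHom with hWdef
    set X : Matrix (Fin N) (Fin N) ℂ := VR.map ⇑Complex.ofRealHom with hXdef
    have hW : W ∈ unitary _ := mapu Complex.ofRealHom starC hUR
    have hX : X ∈ unitary _ := mapu Complex.ofRealHom starC hVR
    have hP : Wᴴ * UC ∈ unitary (Matrix (Fin M) (Fin M) ℂ) := by
      rw [← Matrix.star_eq_conjTranspose]
      exact mul_mem (Unitary.star_mem hW) hUC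
    have hQ : VCᴴ * X ∈ unitary (Matrix (Fin N) (Fin N) ℂ) := by
      rw [← Matrix.star_eq_conjTranspose]
      exact mul_mem (Unitary.star_mem hVC) hX
    have hSC' : ∀ i j, SC i j = if (i : ℕ) = (j : ℕ) then algebraMap ℝ ℂ (σC (i : ℕ)) else 0 :=
      fun i j => by rw [hSC]; rfl
    have hkey := key Complex.reLm (by simp) creLm_le chcol chrow σC hσC SC hSC'
      (Wᴴ * UC) (VCᴴ * X) hP hQ
    have hPSQ : (Wᴴ * UC) * SC * (VCᴴ * X) = Wᴴ * B * X := by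
      rw [hBC]; simp only [Matrix.mul_assoc]
    have hURV : URᴴ * A0 * VR = SR := by
      rw [hAR]; exact sandwich UR VR SR hUR hVR
    have hB0 : ∀ i j, (B i j).re = A0 i j := fun i j => by rw [hB]
    calc ∑ i ∈ range (min M N), σR i
        = ∑ k : Fin (min M N), σR (k : ℕ) := (Fin.sum_univ_eq_sum_range _ _).symm
      _ = ∑ k : Fin (min M N), Complex.reLm (((Wᴴ * UC) * SC * (VCᴴ * X))
            (Fin.castLE (min_le_left M N) k) (Fin.castLE (min_le_right M N) k)) := by
          refine Finset.sum_congr rfl fun k _ => ?_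
          rw [show ∀ z : ℂ, Complex.reLm z = z.re from fun _ => rfl, hPSQ,
            transfer1 UR VR A0 B hB0, hURV, hSR]
          simp
      _ ≤ ∑ i ∈ range (min M N), σC i := hkey
  · -- complex ≤ quaternion
    set W : Matrix (Fin M) (Fin M) ℍ[ℝ] := UC.map coeComplex with hWdef
    set X : Matrix (Fin N) (Fin N) ℍ[ℝ] := VC.map coeComplex with hXdef
    have hW : W ∈ unitary _ := mapu Quaternion.ofComplex.toRingHom starQ hUC
    have hX : X ∈ unitary _ := mapu Quaternion.ofComplex.toRingHom starQ hVC
    have hP : Wᴴ * UQ ∈ unitary (Matrix (Fin M) (Fin M) ℍ[ℝ]) := by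
      rw [← Matrix.star_eq_conjTranspose]
      exact mul_mem (Unitary.star_mem hW) hUQ
    have hQ : VQᴴ * X ∈ unitary (Matrix (Fin N) (Fin N) ℍ[ℝ]) := by
      rw [← Matrix.star_eq_conjTranspose]
      exact mul_mem (Unitary.star_mem hVQ) hX
    have hSQ' : ∀ i j, SQ i j = if (i : ℕ) = (j : ℕ) then algebraMap ℝ ℍ[ℝ] (σQ (i : ℕ)) else 0 :=
      fun i j => by rw [hSQ]; rfl
    have hkey := key (QuaternionAlgebra.reₗ (-1 : ℝ) (0 : ℝ) (-1 : ℝ)) rfl qre_le qhcol qhrow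
      σQ hσQ SQ hSQ' (Wᴴ * UQ) (VQᴴ * X) hP hQ
    have hPSQ : (Wᴴ * UQ) * SQ * (VQᴴ * X) = Wᴴ * A * X := by
      rw [hAQ]; simp only [Matrix.mul_assoc]
    have hUCV : UCᴴ * B * VC = SC := by
      rw [hBC]; exact sandwich UC VC SC hUC hVC
    have h1 : ∀ i j, (B i j).re = (A i j).re := fun i j => by rw [hB, hA]
    have h2 : ∀ i j, (B i j).im = (A i j).imI := fun i j => by rw [hB, hA]
    calc ∑ i ∈ range (min M N), σC i
        = ∑ k : Fin (min M N), σC (k : ℕ) := (Fin.sum_univ_eq_sum_range _ _).symm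
      _ = ∑ k : Fin (min M N), (QuaternionAlgebra.reₗ (-1 : ℝ) (0 : ℝ) (-1 : ℝ))
            (((Wᴴ * UQ) * SQ * (VQᴴ * X))
            (Fin.castLE (min_le_left M N) k) (Fin.castLE (min_le_right M N) k)) := by
          refine Finset.sum_congr rfl fun k _ => ?_
          rw [show ∀ q : ℍ[ℝ], (QuaternionAlgebra.reₗ (-1 : ℝ) (0 : ℝ) (-1 : ℝ)) q = q.re from
              fun _ => rfl, hPSQ, transfer2 UC VC A B h1 h2, hUCV, hSC]
          simp
      _ ≤ ∑ i ∈ range (min M N), σQ i := hkey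
end

section
/- Let A = A₀ + A₁i + A₂j + A₃k be a quaternion matrix with real components A₀,...,A₃ ∈ ℝ^{M×N}, and let ν = (ν₀, ν₁, ν₂, ν₃) ∈ ℝ⁴ be a unit vector. Then ||A||_* ≥ ||ν₀A₀ + ν₁A₁ + ν₂A₂ + ν₃A₃||_*, where the right side is the nuclear norm of a real matrix. -/
open Quaternion Matrix Finset

set_option maxHeartbeats 2000000

lemma re_sum {ι : Type*} (s : Finset ι) (f : ι → ℍ[ℝ]) :
    (∑ i ∈ s, f i).re = ∑ i ∈ s, (f i).re := by
  induction s using Finset.cons_induction with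
  | empty => simp
  | cons a s ha ih => simp [Finset.sum_cons, ih]

lemma re_le_norm (x : ℍ[ℝ]) : x.re ≤ ‖x‖ := by
  have h1 : x.re * x.re ≤ Quaternion.normSq x := by
    rw [Quaternion.normSq_def']
    nlinarith [sq_nonneg x.imI, sq_nonneg x.imJ, sq_nonneg x.imK]
  nlinarith [norm_nonneg x, Quaternion.normSq_eq_norm_mul_self x]

lemma key_re_bound (q u v : ℍ[ℝ]) (hq : ‖q‖ = 1) :
    (star q * u * v).re ≤ ‖u‖ * ‖v‖ := by
  calc (star q * u * v).re ≤ ‖star q * u * v‖ := re_le_norm _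
    _ = ‖u‖ * ‖v‖ := by rw [norm_mul, norm_mul, Quaternion.norm_star, hq, one_mul]

lemma diagSum (M N : ℕ) (f : ℕ → ℝ) :
    ∑ k : Fin M, ∑ k' : Fin N, (if (k : ℕ) = (k' : ℕ) then f (k : ℕ) else 0)
      = ∑ i ∈ range (min M N), f i := by
  have h1 : ∀ k : Fin M, ∑ k' : Fin N, (if (k : ℕ) = (k' : ℕ) then f (k : ℕ) else 0)
      = if (k : ℕ) < N then f (k : ℕ) else 0 := by
    intro k
    rw [Fin.sum_univ_eq_sum_range (fun j => if (k : ℕ) = j then f (k : ℕ) else 0) N,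
      Finset.sum_ite_eq (range N) (k : ℕ) (fun _ => f (k : ℕ))]
    simp [Finset.mem_range]
  simp_rw [h1]
  rw [Fin.sum_univ_eq_sum_range (fun i => if i < N then f i else 0) M, ← Finset.sum_filter]
  congr 1
  ext i
  simp only [Finset.mem_filter, Finset.mem_range, Nat.lt_min]

lemma ite_diag_sum_le {N : ℕ} (a : ℕ) (c : ℝ) (hc : 0 ≤ c) :
    ∑ k' : Fin N, (if a = (k' : ℕ) then c else 0) ≤ c := by
  rw [Fin.sum_univ_eq_sum_range (fun j => if a = j then c else 0) N,
    Finset.sum_ite_eq (range N) a (fun _ => c)]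
  split <;> simp [hc]

lemma ite_diag_sum_le' {M : ℕ} (a : ℕ) (c : ℝ) (hc : 0 ≤ c) :
    ∑ k : Fin M, (if (k : ℕ) = a then c else 0) ≤ c := by
  rw [Fin.sum_univ_eq_sum_range (fun j => if j = a then c else 0) M,
    Finset.sum_ite_eq' (range M) a (fun _ => c)]
  split <;> simp [hc]

lemma swap4 {α β γ δ : Type*} [Fintype α] [Fintype β] [Fintype γ] [Fintype δ]
    (G : α → β → γ → δ → ℝ) :
    ∑ a : α, ∑ b : β, ∑ c : γ, ∑ d : δ, G a b c d
      = ∑ c : γ, ∑ d : δ, ∑ a : α, ∑ b : β, G a b c d := by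
  calc ∑ a : α, ∑ b : β, ∑ c : γ, ∑ d : δ, G a b c d
      = ∑ a : α, ∑ c : γ, ∑ b : β, ∑ d : δ, G a b c d :=
        Finset.sum_congr rfl fun a _ => Finset.sum_comm
    _ = ∑ c : γ, ∑ a : α, ∑ b : β, ∑ d : δ, G a b c d := Finset.sum_comm
    _ = ∑ c : γ, ∑ a : α, ∑ d : δ, ∑ b : β, G a b c d :=
        Finset.sum_congr rfl fun c _ => Finset.sum_congr rfl fun a _ => Finset.sum_comm
    _ = ∑ c : γ, ∑ d : δ, ∑ a : α, ∑ b : β, G a b c d :=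
        Finset.sum_congr rfl fun c _ => Finset.sum_comm

lemma sum_normSq_smul {m n : Type*} [Fintype m] [Fintype n] [DecidableEq m]
    (c : m → n → ℝ) (x : m → ℍ[ℝ])
    (hc : ∀ i i', ∑ k, c i k * c i' k = if i = i' then (1 : ℝ) else 0) :
    ∑ k, Quaternion.normSq (∑ i, c i k • x i) = ∑ i, Quaternion.normSq (x i) := by
  have hn : ∀ u : ℍ[ℝ], Quaternion.normSq u = (star u * u).re := by
    intro u; rw [Quaternion.star_mul_self]; simp
  calc ∑ k, Quaternion.normSq (∑ i, c i k • x i)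
      = ∑ k, ∑ i, ∑ i', (c i k * c i' k) * (star (x i) * x i').re := by
        refine Finset.sum_congr rfl fun k _ => ?_
        rw [hn, star_sum]
        simp_rw [Quaternion.star_smul]
        rw [Finset.sum_mul_sum, re_sum]
        refine Finset.sum_congr rfl fun i _ => ?_
        rw [re_sum]
        refine Finset.sum_congr rfl fun i' _ => ?_
        rw [smul_mul_smul_comm, Quaternion.re_smul, smul_eq_mul]
    _ = ∑ i, ∑ i', (∑ k, c i k * c i' k) * (star (x i) * x i').re := by
        rw [Finset.sum_comm]
        refine Finset.sum_congr rfl fun i _ => ?_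
        rw [Finset.sum_comm]
        refine Finset.sum_congr rfl fun i' _ => ?_
        rw [Finset.sum_mul]
    _ = ∑ i, Quaternion.normSq (x i) := by
        simp_rw [hc, ite_mul, one_mul, zero_mul]
        refine Finset.sum_congr rfl fun i _ => ?_
        rw [Finset.sum_ite_eq (Finset.univ) i (fun i' => (star (x i) * x i').re)]
        simp [hn]


/-- Let `A = A₀ + A₁i + A₂j + A₃k` be a quaternion matrix with real components
`A₀,...,A₃` and let `ν = (ν₀,ν₁,ν₂,ν₃)` be a unit vector in `ℝ⁴`.  Then
`‖A‖_* ≥ ‖ν₀A₀ + ν₁A₁ + ν₂A₂ + ν₃A₃‖_*`, where the nuclear norms are the sums of the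
singular values from a quaternion SVD of `A` and a real SVD of the real matrix
`ν₀A₀ + ν₁A₁ + ν₂A₂ + ν₃A₃`. -/
theorem stmt3 (M N : ℕ)
    (A0 A1 A2 A3 : Matrix (Fin M) (Fin N) ℝ)
    (A : Matrix (Fin M) (Fin N) ℍ[ℝ])
    (hA : ∀ i j, A i j = ⟨A0 i j, A1 i j, A2 i j, A3 i j⟩)
    (ν0 ν1 ν2 ν3 : ℝ) (hν : ν0 ^ 2 + ν1 ^ 2 + ν2 ^ 2 + ν3 ^ 2 = 1)
    -- quaternion SVD of A
    (UQ : Matrix (Fin M) (Fin M) ℍ[ℝ]) (VQ : Matrix (Fin N) (Fin N) ℍ[ℝ])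
    (σQ : ℕ → ℝ) (SQ : Matrix (Fin M) (Fin N) ℍ[ℝ])
    (hUQ : UQ ∈ unitary (Matrix (Fin M) (Fin M) ℍ[ℝ]))
    (hVQ : VQ ∈ unitary (Matrix (Fin N) (Fin N) ℍ[ℝ]))
    (hσQ : ∀ i, 0 ≤ σQ i)
    (hSQ : ∀ i j, SQ i j = if (i : ℕ) = (j : ℕ) then ((σQ i : ℝ) : ℍ[ℝ]) else 0)
    (hAQ : A = UQ * SQ * VQᴴ)
    -- real SVD of ν₀A₀ + ν₁A₁ + ν₂A₂ + ν₃A₃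
    (UR : Matrix (Fin M) (Fin M) ℝ) (VR : Matrix (Fin N) (Fin N) ℝ)
    (σR : ℕ → ℝ) (SR : Matrix (Fin M) (Fin N) ℝ)
    (hUR : UR ∈ unitary (Matrix (Fin M) (Fin M) ℝ))
    (hVR : VR ∈ unitary (Matrix (Fin N) (Fin N) ℝ))
    (hσR : ∀ i, 0 ≤ σR i)
    (hSR : ∀ i j, SR i j = if (i : ℕ) = (j : ℕ) then σR i else 0)
    (hAR : ν0 • A0 + ν1 • A1 + ν2 • A2 + ν3 • A3 = UR * SR * VRᴴ) :
    ∑ i ∈ range (min M N), σR i ≤ ∑ i ∈ range (min M N), σQ i := by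
  classical
  -- unitarity facts
  have hUR1 : URᴴ * UR = 1 := by
    rw [← Matrix.star_eq_conjTranspose]; exact (Unitary.mem_iff.mp hUR).1
  have hUR2 : UR * URᴴ = 1 := by
    rw [← Matrix.star_eq_conjTranspose]; exact (Unitary.mem_iff.mp hUR).2
  have hVR1 : VRᴴ * VR = 1 := by
    rw [← Matrix.star_eq_conjTranspose]; exact (Unitary.mem_iff.mp hVR).1
  have hVR2 : VR * VRᴴ = 1 := by
    rw [← Matrix.star_eq_conjTranspose]; exact (Unitary.mem_iff.mp hVR).2
  have hUQ1 : UQᴴ * UQ = 1 := by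
    rw [← Matrix.star_eq_conjTranspose]; exact (Unitary.mem_iff.mp hUQ).1
  have hVQ1 : VQᴴ * VQ = 1 := by
    rw [← Matrix.star_eq_conjTranspose]; exact (Unitary.mem_iff.mp hVQ).1
  -- the unit quaternion
  set q : ℍ[ℝ] := (⟨ν0, ν1, ν2, ν3⟩ : ℍ[ℝ]) with hqdef
  have hqns : Quaternion.normSq q = 1 := by
    rw [Quaternion.normSq_def']
    simpa [hqdef] using hν
  have hq : ‖q‖ = 1 := by
    have h2 := Quaternion.normSq_eq_norm_mul_self q
    nlinarith [norm_nonneg q]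
  have hBij : ∀ i j, (star q * A i j).re
      = ν0 • A0 i j + ν1 • A1 i j + ν2 • A2 i j + ν3 • A3 i j := by
    intro i j
    rw [Quaternion.re_mul, Quaternion.re_star, Quaternion.imI_star, Quaternion.imJ_star,
      Quaternion.imK_star, hA i j, hqdef]
    simp only [Quaternion.re_star, Quaternion.imI_star, Quaternion.imJ_star,
      Quaternion.imK_star, smul_eq_mul]
    ring
  have hAentry : ∀ i j, A i j = ∑ l : Fin M, ∑ m : Fin N,
      (if (l : ℕ) = (m : ℕ) then σQ (l : ℕ) • (UQ i l * star (VQ j m)) else 0) := by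
    intro i j
    rw [hAQ]
    simp only [Matrix.mul_apply, Matrix.conjTranspose_apply, Finset.sum_mul]
    rw [Finset.sum_comm]
    refine Finset.sum_congr rfl fun l _ => Finset.sum_congr rfl fun m _ => ?_
    rw [hSQ]
    split_ifs with h
    · rw [Quaternion.mul_coe_eq_smul, smul_mul_assoc]
    · rw [mul_zero, zero_mul]
  have hB : URᴴ * (ν0 • A0 + ν1 • A1 + ν2 • A2 + ν3 • A3) * VR = SR := by
    rw [hAR,
      show URᴴ * (UR * SR * VRᴴ) * VR = (URᴴ * UR) * (SR * (VRᴴ * VR)) by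
        simp only [Matrix.mul_assoc],
      hUR1, hVR1, Matrix.one_mul, Matrix.mul_one]
  have hinner : ∀ (i : Fin M) (j : Fin N), (star q * A i j).re
      = ∑ l : Fin M, ∑ m : Fin N, (if (l : ℕ) = (m : ℕ) then
          σQ (l : ℕ) * (star q * (UQ i l * star (VQ j m))).re else 0) := by
    intro i j
    rw [hAentry i j, Finset.mul_sum, re_sum]
    refine Finset.sum_congr rfl fun l _ => ?_
    rw [Finset.mul_sum, re_sum]
    refine Finset.sum_congr rfl fun m _ => ?_
    split_ifs with h
    · rw [mul_smul_comm, Quaternion.re_smul, smul_eq_mul]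
    · simp
  have coreE : ∀ (k : Fin M) (k' : Fin N), SR k k'
      = ∑ l : Fin M, ∑ m : Fin N, (if (l : ℕ) = (m : ℕ) then
          σQ (l : ℕ) * (star q * (∑ i, UR i k • UQ i l)
            * (∑ j, VR j k' • star (VQ j m))).re else 0) := by
    intro k k'
    rw [← hB]
    calc (URᴴ * (ν0 • A0 + ν1 • A1 + ν2 • A2 + ν3 • A3) * VR) k k'
        = ∑ j : Fin N, ∑ i : Fin M, ∑ l : Fin M, ∑ m : Fin N,
            (if (l : ℕ) = (m : ℕ) then
              UR i k * VR j k' * (σQ (l : ℕ)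
                * (star q * (UQ i l * star (VQ j m))).re) else 0) := by
          simp only [Matrix.mul_apply, Matrix.conjTranspose_apply, star_trivial,
            Matrix.add_apply, Matrix.smul_apply, Finset.sum_mul]
          refine Finset.sum_congr rfl fun j _ => Finset.sum_congr rfl fun i _ => ?_
          rw [← hBij i j, hinner i j, Finset.mul_sum, Finset.sum_mul]
          refine Finset.sum_congr rfl fun l _ => ?_
          rw [Finset.mul_sum, Finset.sum_mul]
          refine Finset.sum_congr rfl fun m _ => ?_
          split_ifs with h
          · ring
          · ring
      _ = ∑ l : Fin M, ∑ m : Fin N, ∑ j : Fin N, ∑ i : Fin M,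
            (if (l : ℕ) = (m : ℕ) then
              UR i k * VR j k' * (σQ (l : ℕ)
                * (star q * (UQ i l * star (VQ j m))).re) else 0) := swap4 _
      _ = _ := by
          refine Finset.sum_congr rfl fun l _ => Finset.sum_congr rfl fun m _ => ?_
          by_cases h : (l : ℕ) = (m : ℕ)
          · rw [if_pos h]
            have e1 : star q * (∑ i, UR i k • UQ i l)
                = ∑ i, UR i k • (star q * UQ i l) := by
              rw [Finset.mul_sum]
              exact Finset.sum_congr rfl fun i _ => mul_smul_comm _ _ _
            have expand : star q * (∑ i, UR i k • UQ i l) * (∑ j, VR j k' • star (VQ j m))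
                = ∑ i : Fin M, ∑ j : Fin N,
                    (UR i k * VR j k') • (star q * UQ i l * star (VQ j m)) := by
              rw [e1, Finset.sum_mul]
              refine Finset.sum_congr rfl fun i _ => ?_
              rw [Finset.mul_sum]
              refine Finset.sum_congr rfl fun j _ => ?_
              rw [smul_mul_smul_comm]
            rw [expand, re_sum, Finset.mul_sum, Finset.sum_comm]
            refine Finset.sum_congr rfl fun i _ => ?_
            rw [re_sum, Finset.mul_sum]
            refine Finset.sum_congr rfl fun j _ => ?_
            rw [if_pos h, Quaternion.re_smul, smul_eq_mul,
              show star q * (UQ i l * star (VQ j m))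
                = star q * UQ i l * star (VQ j m) from (mul_assoc _ _ _).symm]
            ring
          · rw [if_neg h]
            simp [if_neg h]
  -- orthonormality sums
  have horthU : ∀ i i' : Fin M, ∑ k, UR i k * UR i' k = if i = i' then (1 : ℝ) else 0 := by
    intro i i'
    have h2 : (UR * URᴴ) i i' = (1 : Matrix (Fin M) (Fin M) ℝ) i i' := by rw [hUR2]
    rw [Matrix.mul_apply, Matrix.one_apply] at h2
    simpa [Matrix.conjTranspose_apply] using h2
  have horthV : ∀ j j' : Fin N, ∑ k', VR j k' * VR j' k' = if j = j' then (1 : ℝ) else 0 := by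
    intro j j'
    have h2 : (VR * VRᴴ) j j' = (1 : Matrix (Fin N) (Fin N) ℝ) j j' := by rw [hVR2]
    rw [Matrix.mul_apply, Matrix.one_apply] at h2
    simpa [Matrix.conjTranspose_apply] using h2
  have hcolU : ∀ l : Fin M, ∑ i, Quaternion.normSq (UQ i l) = 1 := by
    intro l
    have h2 : (UQᴴ * UQ) l l = (1 : Matrix (Fin M) (Fin M) ℍ[ℝ]) l l := by rw [hUQ1]
    rw [Matrix.mul_apply, Matrix.one_apply_eq] at h2
    simp only [Matrix.conjTranspose_apply] at h2
    have h3 := congrArg QuaternionAlgebra.re h2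
    rw [re_sum] at h3
    simpa [Quaternion.star_mul_self] using h3
  have hcolV : ∀ m : Fin N, ∑ j, Quaternion.normSq (VQ j m) = 1 := by
    intro m
    have h2 : (VQᴴ * VQ) m m = (1 : Matrix (Fin N) (Fin N) ℍ[ℝ]) m m := by rw [hVQ1]
    rw [Matrix.mul_apply, Matrix.one_apply_eq] at h2
    simp only [Matrix.conjTranspose_apply] at h2
    have h3 := congrArg QuaternionAlgebra.re h2
    rw [re_sum] at h3
    simpa [Quaternion.star_mul_self] using h3
  -- the key bound
  have hw : ∀ (l : Fin M) (m : Fin N),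
      (∑ k : Fin M, ∑ k' : Fin N, if (k : ℕ) = (k' : ℕ) then
        (star q * (∑ i, UR i k • UQ i l) * (∑ j, VR j k' • star (VQ j m))).re else 0) ≤ 1 := by
    intro l m
    set f : Fin M → ℝ := fun k => ‖∑ i, UR i k • UQ i l‖ with hf
    set g : Fin N → ℝ := fun k' => ‖∑ j, VR j k' • star (VQ j m)‖ with hg
    have hS1 : ∑ k, f k ^ 2 = 1 := by
      have horth := sum_normSq_smul (fun i k => UR i k) (fun i => UQ i l) horthU
      calc ∑ k, f k ^ 2 = ∑ k, Quaternion.normSq (∑ i, UR i k • UQ i l) := by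
            refine Finset.sum_congr rfl fun k _ => ?_
            rw [hf, sq, ← Quaternion.normSq_eq_norm_mul_self]
        _ = ∑ i, Quaternion.normSq (UQ i l) := horth
        _ = 1 := hcolU l
    have hS2 : ∑ k', g k' ^ 2 = 1 := by
      have horth := sum_normSq_smul (fun j k' => VR j k') (fun j => star (VQ j m)) horthV
      calc ∑ k', g k' ^ 2 = ∑ k', Quaternion.normSq (∑ j, VR j k' • star (VQ j m)) := by
            refine Finset.sum_congr rfl fun k' _ => ?_
            rw [hg, sq, ← Quaternion.normSq_eq_norm_mul_self]
        _ = ∑ j, Quaternion.normSq (star (VQ j m)) := horth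
        _ = 1 := by simp only [Quaternion.normSq_star]; exact hcolV m
    have step1 : (∑ k : Fin M, ∑ k' : Fin N, if (k : ℕ) = (k' : ℕ) then
        (star q * (∑ i, UR i k • UQ i l) * (∑ j, VR j k' • star (VQ j m))).re else 0)
        ≤ ∑ k : Fin M, ∑ k' : Fin N, if (k : ℕ) = (k' : ℕ) then f k * g k' else 0 := by
      refine Finset.sum_le_sum fun k _ => Finset.sum_le_sum fun k' _ => ?_
      split_ifs with h
      · exact key_re_bound q _ _ hq
      · exact le_refl 0
    have step2 : (∑ k : Fin M, ∑ k' : Fin N,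
        if (k : ℕ) = (k' : ℕ) then f k * g k' else 0) ≤ 1 := by
      set s : Finset (Fin M × Fin N) :=
        Finset.univ.filter (fun p : Fin M × Fin N => (p.1 : ℕ) = (p.2 : ℕ)) with hs
      have hTs : (∑ k : Fin M, ∑ k' : Fin N,
          if (k : ℕ) = (k' : ℕ) then f k * g k' else 0)
          = ∑ p ∈ s, f p.1 * g p.2 := by
        rw [hs, Finset.sum_filter, Fintype.sum_prod_type]
      have hcs := sum_mul_sq_le_sq_mul_sq s (fun p => f p.1) (fun p => g p.2)
      have hA1 : ∑ p ∈ s, f p.1 ^ 2 ≤ 1 := by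
        rw [hs, Finset.sum_filter, Fintype.sum_prod_type, ← hS1]
        refine Finset.sum_le_sum fun k _ => ?_
        exact ite_diag_sum_le (k : ℕ) (f k ^ 2) (sq_nonneg _)
      have hA2 : ∑ p ∈ s, g p.2 ^ 2 ≤ 1 := by
        rw [hs, Finset.sum_filter, Fintype.sum_prod_type, Finset.sum_comm, ← hS2]
        refine Finset.sum_le_sum fun k' _ => ?_
        exact ite_diag_sum_le' (k' : ℕ) (g k' ^ 2) (sq_nonneg _)
      have hTnn : 0 ≤ ∑ p ∈ s, f p.1 * g p.2 := by
        refine Finset.sum_nonneg fun p _ => mul_nonneg (norm_nonneg _) (norm_nonneg _)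
      have hA10 : (0:ℝ) ≤ ∑ p ∈ s, f p.1 ^ 2 := Finset.sum_nonneg fun p _ => sq_nonneg _
      have hA20 : (0:ℝ) ≤ ∑ p ∈ s, g p.2 ^ 2 := Finset.sum_nonneg fun p _ => sq_nonneg _
      rw [hTs]
      nlinarith [hcs, hA1, hA2, hTnn, hA10, hA20]
    exact step1.trans step2
  -- final assembly
  rw [← diagSum M N σR, ← diagSum M N σQ]
  calc ∑ k : Fin M, ∑ k' : Fin N, (if (k : ℕ) = (k' : ℕ) then σR (k : ℕ) else 0)
      = ∑ k : Fin M, ∑ k' : Fin N, (if (k : ℕ) = (k' : ℕ) then SR k k' else 0) := by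
        refine Finset.sum_congr rfl fun k _ => Finset.sum_congr rfl fun k' _ => ?_
        rw [hSR k k']
        split_ifs <;> rfl
    _ = ∑ k : Fin M, ∑ k' : Fin N, ∑ l : Fin M, ∑ m : Fin N,
          (if (k : ℕ) = (k' : ℕ) then (if (l : ℕ) = (m : ℕ) then
            σQ (l : ℕ) * (star q * (∑ i, UR i k • UQ i l)
              * (∑ j, VR j k' • star (VQ j m))).re else 0) else 0) := by
        refine Finset.sum_congr rfl fun k _ => Finset.sum_congr rfl fun k' _ => ?_
        rw [coreE k k']
        by_cases h : (k : ℕ) = (k' : ℕ)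
        · rw [if_pos h]
          exact Finset.sum_congr rfl fun l _ => Finset.sum_congr rfl fun m _ => (if_pos h).symm
        · rw [if_neg h]
          exact (Finset.sum_eq_zero fun l _ => Finset.sum_eq_zero fun m _ => if_neg h).symm
    _ = ∑ l : Fin M, ∑ m : Fin N, ∑ k : Fin M, ∑ k' : Fin N,
          (if (k : ℕ) = (k' : ℕ) then (if (l : ℕ) = (m : ℕ) then
            σQ (l : ℕ) * (star q * (∑ i, UR i k • UQ i l)
              * (∑ j, VR j k' • star (VQ j m))).re else 0) else 0) := swap4 _
    _ = ∑ l : Fin M, ∑ m : Fin N, (if (l : ℕ) = (m : ℕ) then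
          σQ (l : ℕ) * (∑ k : Fin M, ∑ k' : Fin N, if (k : ℕ) = (k' : ℕ) then
            (star q * (∑ i, UR i k • UQ i l)
              * (∑ j, VR j k' • star (VQ j m))).re else 0) else 0) := by
        refine Finset.sum_congr rfl fun l _ => Finset.sum_congr rfl fun m _ => ?_
        by_cases h : (l : ℕ) = (m : ℕ)
        · rw [if_pos h]
          conv_rhs => rw [Finset.mul_sum]
          refine Finset.sum_congr rfl fun k _ => ?_
          conv_rhs => rw [Finset.mul_sum]
          refine Finset.sum_congr rfl fun k' _ => ?_
          by_cases h2 : (k : ℕ) = (k' : ℕ)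
          · rw [if_pos h2, if_pos h2, if_pos h]
          · rw [if_neg h2, if_neg h2, mul_zero]
        · rw [if_neg h]
          refine Finset.sum_eq_zero fun k _ => Finset.sum_eq_zero fun k' _ => ?_
          by_cases h2 : (k : ℕ) = (k' : ℕ)
          · rw [if_pos h2, if_neg h]
          · rw [if_neg h2]
    _ ≤ ∑ l : Fin M, ∑ m : Fin N, (if (l : ℕ) = (m : ℕ) then σQ (l : ℕ) else 0) := by
        refine Finset.sum_le_sum fun l _ => Finset.sum_le_sum fun m _ => ?_
        by_cases h : (l : ℕ) = (m : ℕ)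
        · rw [if_pos h, if_pos h]
          calc σQ (l : ℕ) * _ ≤ σQ (l : ℕ) * 1 :=
                mul_le_mul_of_nonneg_left (hw l m) (hσQ _)
            _ = σQ (l : ℕ) := mul_one _
        · rw [if_neg h, if_neg h]
end

section
/- Let Σ_c be a 3×3 real symmetric positive definite matrix. Among all 3×3 real symmetric positive definite matrices W with Tr(W) = 3, the quantity Tr(W Σ_c W) is uniquely minimized at W_c = 3·Σ_c⁻¹ / Tr(Σ_c⁻¹), with minimal value 9 / Tr(Σ_c⁻¹). -/
open Matrix

lemma posdef_smul' {n : Type*} [Fintype n] {M : Matrix n n ℝ} (hM : M.PosDef)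
    {c : ℝ} (hc : 0 < c) : (c • M).PosDef := by
  refine Matrix.PosDef.of_dotProduct_mulVec_pos ?_ fun x hx => ?_
  · have h := hM.1.eq
    unfold Matrix.IsHermitian
    rw [conjTranspose_smul, h, star_trivial]
  · have h := hM.dotProduct_mulVec_pos hx
    calc (0:ℝ) < c * (star x ⬝ᵥ M *ᵥ x) := by positivity
    _ = star x ⬝ᵥ (c • M) *ᵥ x := by
        rw [smul_mulVec, dotProduct_smul]; rfl

lemma posdef_trace_pos {n : Type*} [Fintype n] [DecidableEq n] [Nonempty n]
    {M : Matrix n n ℝ} (hM : M.PosDef) : 0 < M.trace := by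
  have h : ∀ i, 0 < M i i := by
    intro i
    have := hM.dotProduct_mulVec_pos (x := Pi.single i 1) (by simp [Pi.single_eq_same, Function.ne_iff])
    simpa [dotProduct, mulVec, Pi.single_apply] using this
  exact Finset.sum_pos (fun i _ => h i) ⟨Classical.arbitrary n, Finset.mem_univ _⟩

lemma trace_mul_pos {Sc : Matrix (Fin 3) (Fin 3) ℝ} (hSc : Sc.PosDef)
    (D : Matrix (Fin 3) (Fin 3) ℝ) (hDs : Dᵀ = D) (hD0 : D ≠ 0) :
    0 < (D * Sc * D).trace := by
  have hsym : ∀ i j, D j i = D i j := fun i j => by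
    conv_lhs => rw [← hDs, transpose_apply]
  have key : (D * Sc * D).trace
      = ∑ j, (fun i => D i j) ⬝ᵥ Sc *ᵥ (fun i => D i j) := by
    unfold Matrix.trace
    refine Finset.sum_congr rfl fun j _ => ?_
    simp only [Matrix.diag, Matrix.mul_apply, dotProduct, Matrix.mulVec,
      Finset.sum_mul, Finset.mul_sum]
    rw [Finset.sum_comm]
    refine Finset.sum_congr rfl fun i _ => Finset.sum_congr rfl fun k _ => ?_
    rw [hsym i j]; ring
  rw [key]
  obtain ⟨i0, j0, hij⟩ : ∃ i j, D i j ≠ 0 := by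
    by_contra h
    push_neg at h
    exact hD0 (by ext i j; simp [h])
  refine Finset.sum_pos' (fun j _ => ?_) ⟨j0, Finset.mem_univ _, ?_⟩
  · have := hSc.posSemidef.dotProduct_mulVec_nonneg (fun i => D i j)
    simpa using this
  · have hx : (fun i => D i j0) ≠ 0 := by
      intro h
      exact hij (congrFun h i0)
    have := hSc.dotProduct_mulVec_pos hx
    simpa using this

/-- Among all `3×3` real symmetric positive definite matrices `W` with `Tr W = 3`,
`Tr(W Σ_c W)` is uniquely minimized at `W_c = 3 Σ_c⁻¹ / Tr(Σ_c⁻¹)`, with minimal value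
`9 / Tr(Σ_c⁻¹)`. -/
theorem stmt6 (Sc : Matrix (Fin 3) (Fin 3) ℝ) (hSc : Sc.PosDef) :
    let Wc : Matrix (Fin 3) (Fin 3) ℝ := (3 / (Sc⁻¹).trace) • Sc⁻¹
    Wc.PosDef ∧ Wc.trace = 3 ∧
      (Wc * Sc * Wc).trace = 9 / (Sc⁻¹).trace ∧
      ∀ W : Matrix (Fin 3) (Fin 3) ℝ, W.PosDef → W.trace = 3 → W ≠ Wc →
        9 / (Sc⁻¹).trace < (W * Sc * W).trace := by
  intro Wc
  have hinv : (Sc⁻¹).PosDef := hSc.inv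
  have ht : 0 < (Sc⁻¹).trace := posdef_trace_pos hinv
  set t := (Sc⁻¹).trace with htdef
  have ht0 : t ≠ 0 := ht.ne'
  have hdet : IsUnit Sc.det := isUnit_iff_ne_zero.mpr hSc.det_pos.ne'
  have h1 : Sc⁻¹ * Sc = 1 := nonsing_inv_mul Sc hdet
  have h2 : Sc * Sc⁻¹ = 1 := mul_nonsing_inv Sc hdet
  have hWcPD : Wc.PosDef := posdef_smul' hinv (by positivity)
  have hWcTr : Wc.trace = 3 := by
    show ((3 / t) • Sc⁻¹).trace = 3
    rw [trace_smul, smul_eq_mul, ← htdef]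
    exact div_mul_cancel₀ 3 ht0
  have hmin : (Wc * Sc * Wc).trace = 9 / t := by
    show (((3 / t) • Sc⁻¹) * Sc * ((3 / t) • Sc⁻¹)).trace = 9 / t
    rw [Matrix.smul_mul, Matrix.smul_mul, Matrix.mul_smul, h1, Matrix.one_mul,
      trace_smul, trace_smul, smul_eq_mul, smul_eq_mul, ← htdef]
    field_simp
    ring
  refine ⟨hWcPD, hWcTr, hmin, ?_⟩
  intro W hW hWtr hne
  set D := W - Wc with hDdef
  have hD0 : D ≠ 0 := sub_ne_zero.mpr hne
  have hDtr : D.trace = 0 := by rw [hDdef, trace_sub, hWtr, hWcTr, sub_self]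
  have hWsym : Wᵀ = W := by
    have h := hW.1.eq
    rwa [conjTranspose_eq_transpose_of_trivial] at h
  have hWcsym : Wcᵀ = Wc := by
    have h := hWcPD.1.eq
    rwa [conjTranspose_eq_transpose_of_trivial] at h
  have hDs : Dᵀ = D := by rw [hDdef, transpose_sub, hWsym, hWcsym]
  have hcross1 : (Wc * Sc * D).trace = 0 := by
    show (((3 / t) • Sc⁻¹) * Sc * D).trace = 0
    rw [Matrix.smul_mul, Matrix.smul_mul, h1, Matrix.one_mul, trace_smul, hDtr,
      smul_zero]
  have hcross2 : (D * Sc * Wc).trace = 0 := by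
    show (D * Sc * ((3 / t) • Sc⁻¹)).trace = 0
    rw [Matrix.mul_smul, Matrix.mul_assoc, h2, Matrix.mul_one, trace_smul, hDtr,
      smul_zero]
  have hexp : (W * Sc * W).trace = 9 / t + (D * Sc * D).trace := by
    have hW' : W = Wc + D := by rw [hDdef]; abel
    rw [hW']
    simp only [Matrix.add_mul, Matrix.mul_add, trace_add]
    rw [hmin, hcross1, hcross2]
    ring
  rw [hexp]
  have := trace_mul_pos hSc D hDs hD0
  linarith
end
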